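/- Let l ≥ 1, L = 2^l, F = [[1,0],[1,1]] over GF(2), and B_L = F^{⊗l}. Let H_L(i) denote the number of nonzero entries of the i-th row of B_L (rows indexed 1,…,L). Then H_L(1) = 1, and for every i with 2 ≤ i ≤ L, H_L(i) = 2·H_L(i − 2^{⌈log₂ i⌉ − 1}). -/

import Mathlib

/-- The 2×2 polarization kernel `F = [[1,0],[1,1]]` over `GF(2)`. -/
def polarF : Matrix (Fin 2) (Fin 2) (ZMod 2) := !![1, 0; 1, 1]

/-- `polarB l` is the `l`-fold Kronecker power `F^{⊗l}` of the polarization kernel,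
with rows and columns reindexed by `Fin (2^l)` (row-major order), so that
`B_L = B_{L/2} ⊗ F` with `L = 2^l`. -/
def polarB : (l : ℕ) → Matrix (Fin (2 ^ l)) (Fin (2 ^ l)) (ZMod 2)
  | 0 => 1
  | l + 1 =>
      Matrix.reindex (finProdFinEquiv.trans (finCongr (pow_succ 2 l).symm))
        (finProdFinEquiv.trans (finCongr (pow_succ 2 l).symm))
        (Matrix.kroneckerMap (· * ·) (polarB l) polarF)

/-- `polarBt l i` is the `i`-th polarization submatrix `B̃_L(i)` (with `i` 1-indexed,
`L = 2^l`): the matrix obtained from `B_L` by replacing its first `i - 1` rows with zeros. -/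
def polarBt (l : ℕ) (i : ℕ) : Matrix (Fin (2 ^ l)) (Fin (2 ^ l)) (ZMod 2) :=
  Matrix.of fun r c => if i - 1 ≤ r.val then polarB l r c else 0

/-- The Hamming weight `H_L` of a row of `B_L = F^{⊗l}`. -/
def rowWeight (l : ℕ) (r : Fin (2 ^ l)) : ℕ :=
  (Finset.univ.filter fun j : Fin (2 ^ l) => polarB l r j ≠ 0).card

def mypop : ℕ → ℕ
  | 0 => 0
  | n + 1 => mypop ((n + 1) / 2) + (n + 1) % 2
decreasing_by exact Nat.div_lt_self (Nat.succ_pos _) one_lt_two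

lemma mypop_eq (n : ℕ) (hn : 0 < n) : mypop n = mypop (n / 2) + n % 2 := by
  obtain ⟨m, rfl⟩ := Nat.exists_eq_succ_of_ne_zero hn.ne'
  rw [mypop]

lemma polarF_row : ∀ b : Fin 2,
    (Finset.univ.filter fun j : Fin 2 => polarF b j ≠ 0).card = b.val + 1 := by
  decide

lemma rowWeight_succ (l : ℕ) (n : ℕ) (h : n < 2 ^ (l+1)) :
    rowWeight (l+1) ⟨n, h⟩ =
      rowWeight l ⟨n / 2, by omega⟩ * (n % 2 + 1) := by
  classical
  have h2 : n / 2 < 2 ^ l := by omega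
  have hm : n % 2 < 2 := Nat.mod_lt _ two_pos
  set e : Fin (2 ^ l) × Fin 2 ≃ Fin (2 ^ (l+1)) :=
    finProdFinEquiv.trans (finCongr (pow_succ 2 l).symm) with he
  have hsymm : ∀ x : Fin (2 ^ (l+1)), e.symm x = (⟨x.val / 2, by omega⟩, ⟨x.val % 2, Nat.mod_lt _ two_pos⟩) := by
    intro x
    simp [he, finProdFinEquiv, finCongr, Fin.divNat, Fin.modNat]
  have happ : ∀ x j : Fin (2 ^ (l+1)),
      polarB (l+1) x j = polarB l (e.symm x).1 (e.symm j).1 * polarF (e.symm x).2 (e.symm j).2 := by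
    intro x j
    show (Matrix.reindex e e (Matrix.kroneckerMap (· * ·) (polarB l) polarF)) x j = _
    simp [Matrix.reindex_apply, Matrix.kroneckerMap]
  unfold rowWeight
  have key : (Finset.univ.filter fun j : Fin (2^(l+1)) => polarB (l+1) ⟨n,h⟩ j ≠ 0).card
      = (Finset.univ.filter fun p : Fin (2^l) × Fin 2 =>
          polarB l ⟨n/2, h2⟩ p.1 ≠ 0 ∧ polarF ⟨n%2, hm⟩ p.2 ≠ 0).card := by
    apply Finset.card_nbij' (fun j => e.symm j) (fun p => e p)
    · intro j hj
      simp only [Finset.mem_coe, Finset.coe_filter, Set.mem_setOf_eq, Finset.mem_filter, Finset.mem_univ, true_and] at hj ⊢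
      rw [happ, hsymm] at hj
      exact mul_ne_zero_iff.mp hj
    · intro p hp
      simp only [Finset.mem_coe, Finset.coe_filter, Set.mem_setOf_eq, Finset.mem_filter, Finset.mem_univ, true_and] at hp ⊢
      rw [happ, hsymm, Equiv.symm_apply_apply]
      exact mul_ne_zero hp.1 hp.2
    · intro j _; exact e.apply_symm_apply j
    · intro p _; exact e.symm_apply_apply p
  rw [key]
  have : (Finset.univ.filter fun p : Fin (2^l) × Fin 2 =>
        polarB l ⟨n/2, h2⟩ p.1 ≠ 0 ∧ polarF ⟨n%2, hm⟩ p.2 ≠ 0)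
      = (Finset.univ.filter fun q => polarB l ⟨n/2, h2⟩ q ≠ 0) ×ˢ
        (Finset.univ.filter fun b => polarF ⟨n%2, hm⟩ b ≠ 0) := by
    ext ⟨a, b⟩
    simp [Finset.mem_product]
  rw [this, Finset.card_product]
  congr 1
  exact polarF_row ⟨n % 2, hm⟩

lemma mypop_eq' (n : ℕ) : mypop n = mypop (n / 2) + n % 2 := by
  cases n with
  | zero => simp [mypop]
  | succ m => rw [mypop]

lemma rowWeight_eq (l : ℕ) : ∀ n : ℕ, ∀ h : n < 2 ^ l,
    rowWeight l ⟨n, h⟩ = 2 ^ mypop n := by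
  induction l with
  | zero =>
    intro n h
    have hn : n = 0 := by omega
    subst hn
    have : ∀ r : Fin (2 ^ 0), rowWeight 0 r = 1 := by decide
    simp [this, mypop]
  | succ l ih =>
    intro n h
    rw [rowWeight_succ, ih (n / 2) (by omega), mypop_eq' n, pow_add]
    have h01 : n % 2 = 0 ∨ n % 2 = 1 := by omega
    rcases h01 with h01 | h01 <;> simp [h01]

lemma mypop_sub : ∀ k : ℕ, ∀ m : ℕ, 2 ^ k ≤ m → m < 2 ^ (k + 1) →
    mypop m = mypop (m - 2 ^ k) + 1 := by
  intro k
  induction k with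
  | zero =>
    intro m h1 h2
    have : m = 1 := by omega
    subst this
    simp [mypop_eq' 1, mypop]
  | succ k ih =>
    intro m h1 h2
    have hp : (2:ℕ) ^ (k + 1) = 2 * 2 ^ k := by ring
    have hp2 : (2:ℕ) ^ (k + 1 + 1) = 2 * (2 * 2 ^ k) := by ring
    rw [hp] at h1 ⊢
    rw [hp2] at h2
    have e1 : (m - 2 * 2 ^ k) / 2 = m / 2 - 2 ^ k := by omega
    have e2 : (m - 2 * 2 ^ k) % 2 = m % 2 := by omega
    rw [mypop_eq' m, mypop_eq' (m - 2 * 2 ^ k), e1, e2,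
      ih (m / 2) (by omega) (by rw [hp]; omega)]
    omega


/-- With rows 1-indexed, the row weights `H_L(i)` of `B_L = F^{⊗l}`
satisfy `H_L(1) = 1` and, for `2 ≤ i ≤ L = 2^l`,
`H_L(i) = 2 · H_L(i − 2^{⌈log₂ i⌉ − 1})` (the paper's recursion (24)). -/
theorem rowWeight_recursion (l : ℕ) (hl : 1 ≤ l) :
    rowWeight l ⟨0, by positivity⟩ = 1 ∧
    ∀ i : ℕ, ∀ (h2 : 2 ≤ i) (hL : i ≤ 2 ^ l),
      rowWeight l ⟨i - 1, by omega⟩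
        = 2 * rowWeight l
            ⟨i - 2 ^ (Nat.clog 2 i - 1) - 1,
              by have h := Nat.sub_le i (2 ^ (Nat.clog 2 i - 1)); omega⟩ := by
  constructor
  · rw [rowWeight_eq]
    simp [mypop]
  · intro i h2 hL
    have hc1 : 1 ≤ Nat.clog 2 i := Nat.clog_pos one_lt_two h2
    have hlow : 2 ^ (Nat.clog 2 i - 1) < i :=
      Nat.pow_pred_clog_lt_self one_lt_two (by omega)
    have hhigh : i ≤ 2 ^ Nat.clog 2 i := Nat.le_pow_clog one_lt_two i
    rw [rowWeight_eq, rowWeight_eq]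
    have hidx : i - 2 ^ (Nat.clog 2 i - 1) - 1 = (i - 1) - 2 ^ (Nat.clog 2 i - 1) := by
      omega
    have hmk : i - 1 < 2 ^ (Nat.clog 2 i - 1 + 1) := by
      rw [Nat.sub_add_cancel hc1]; omega
    rw [hidx, mypop_sub (Nat.clog 2 i - 1) (i - 1) (by omega) hmk, pow_succ]
    ring
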